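/- Let W ∈ ℝ^{n×n} be a mixing matrix with mixing rate α ∈ [0,1), let L > 0 and b ≥ 1 an integer, and for each i = 1,…,n let φ_{i,1}, …, φ_{i,b} : ℝ^d → ℝ be differentiable with L-Lipschitz gradients. Let u, u', v ∈ ℝ^{nd} with blocks u_i, u'_i, v_i, define g ∈ ℝ^{nd} blockwise by g_i = (1/b)·Σ_{j=1}^b (∇φ_{i,j}(u'_i) − ∇φ_{i,j}(u_i)) + v_i, and set v' = (W ⊗ I_d)·g with block average v̄'. Then ‖v' − 1_n ⊗ v̄'‖₂² ≤ (2α²/(1+α²))·‖v − 1_n ⊗ v̄‖₂² + (2α²L²/(1−α²))·‖u' − u‖₂², where v̄ is the block average of v. -/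

import Mathlib

open Finset

noncomputable section

/-- `ℝ^d` as a Euclidean space. -/
abbrev Vec (d : ℕ) := EuclideanSpace ℝ (Fin d)

/-- `ℝ^{nd}` as a stack of `n` blocks in `ℝ^d`, with the Euclidean (ℓ₂) norm. -/
abbrev Stacked (n d : ℕ) := PiLp 2 (fun _ : Fin n => Vec d)

/-- Block average `x̄ = (1/n) Σᵢ xᵢ` of a stacked vector. -/
def blockAvg {n d : ℕ} (x : Stacked n d) : Vec d := (n : ℝ)⁻¹ • ∑ i, x i

/-- The stacked vector `1ₙ ⊗ y` whose every block equals `y`. -/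
def stack (n : ℕ) {d : ℕ} (y : Vec d) : Stacked n d := WithLp.toLp 2 (fun _ => y)

/-- Action of `W ⊗ I_d` on a stacked vector. -/
def kronApply {n d : ℕ} (W : Matrix (Fin n) (Fin n) ℝ) (x : Stacked n d) : Stacked n d :=
  WithLp.toLp 2 (fun i => ∑ j, W i j • x j)

/-- A mixing matrix: `W·1ₙ = 1ₙ` and `Wᵀ·1ₙ = 1ₙ`. -/
def IsMixing {n : ℕ} (W : Matrix (Fin n) (Fin n) ℝ) : Prop :=
  W.mulVec (fun _ => 1) = (fun _ => 1) ∧ Matrix.vecMul (fun _ => 1) W = (fun _ => 1)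

/-- The mixing rate `α = ‖W − (1/n)1ₙ1ₙᵀ‖_op` (ℓ₂ operator norm). -/
def mixingRate {n : ℕ} (W : Matrix (Fin n) (Fin n) ℝ) : ℝ :=
  ‖LinearMap.toContinuousLinearMap
    (Matrix.toEuclideanLin (W - (n : ℝ)⁻¹ • Matrix.of fun _ _ => (1 : ℝ)))‖

/- ### Auxiliary lemmas -/

lemma stacked_norm_sq {n d : ℕ} (x : Stacked n d) : ‖x‖^2 = ∑ i, ‖x i‖^2 :=
  PiLp.norm_sq_eq_of_L2 _ x

lemma euc_norm_sq {m : ℕ} (y : EuclideanSpace ℝ (Fin m)) : ‖y‖^2 = ∑ k, (y k)^2 := by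
  rw [PiLp.norm_sq_eq_of_L2]
  simp [sq_abs]

lemma vec_sum_apply {d : ℕ} {κ : Type*} (s : Finset κ) (f : κ → Vec d) (k : Fin d) :
    (∑ j ∈ s, f j) k = ∑ j ∈ s, f j k :=
  map_sum (PiLp.projₗ (𝕜 := ℝ) 2 (β := fun _ : Fin d => ℝ) k) f s

lemma stacked_sum_apply {n d : ℕ} {κ : Type*} (s : Finset κ) (f : κ → Stacked n d)
    (i : Fin n) : (∑ j ∈ s, f j) i = ∑ j ∈ s, f j i :=
  map_sum (PiLp.projₗ (𝕜 := ℝ) 2 (β := fun _ : Fin n => Vec d) i) f s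

lemma kronApply_coord {n d : ℕ} (M : Matrix (Fin n) (Fin n) ℝ) (x : Stacked n d)
    (i : Fin n) (k : Fin d) : kronApply M x i k = ∑ j, M i j * x j k := by
  unfold kronApply
  rw [vec_sum_apply]
  refine Finset.sum_congr rfl fun j _ => ?_
  rw [PiLp.smul_apply, smul_eq_mul]

lemma toEuclideanLin_coord {n : ℕ} (M : Matrix (Fin n) (Fin n) ℝ)
    (y : EuclideanSpace ℝ (Fin n)) (i : Fin n) :
    Matrix.toEuclideanLin M y i = ∑ j, M i j * y j := by
  rw [Matrix.toEuclideanLin_apply]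
  rfl

/-- operator-norm bound for the Kronecker action -/
lemma kron_op_bound {n d : ℕ} (M : Matrix (Fin n) (Fin n) ℝ) (x : Stacked n d) :
    ‖kronApply M x‖ ≤
      ‖LinearMap.toContinuousLinearMap (Matrix.toEuclideanLin M)‖ * ‖x‖ := by
  set T := LinearMap.toContinuousLinearMap (Matrix.toEuclideanLin M) with hT
  set y : Fin d → EuclideanSpace ℝ (Fin n) := fun k => WithLp.toLp 2 (fun i => x i k) with hy
  have hsq : ‖kronApply M x‖^2 ≤ (‖T‖ * ‖x‖)^2 := by
    have h1 : ‖kronApply M x‖^2 = ∑ k, ‖T (y k)‖^2 := by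
      rw [stacked_norm_sq]
      simp_rw [euc_norm_sq]
      rw [Finset.sum_comm]
      refine Finset.sum_congr rfl fun k _ => ?_
      refine Finset.sum_congr rfl fun i _ => ?_
      have hTy : (T (y k)) i = ∑ j, M i j * x j k := by
        have h := toEuclideanLin_coord M (y k) i
        simpa [hT, hy] using h
      rw [kronApply_coord, hTy]
    have h2 : ∑ k, ‖T (y k)‖^2 ≤ ∑ k, (‖T‖ * ‖y k‖)^2 := by
      refine Finset.sum_le_sum fun k _ => ?_
      exact pow_le_pow_left₀ (norm_nonneg _) (T.le_opNorm (y k)) 2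
    have h4 : ∑ k, ‖y k‖^2 = ‖x‖^2 := by
      rw [stacked_norm_sq]
      simp_rw [euc_norm_sq]
      rw [Finset.sum_comm]
    calc ‖kronApply M x‖^2 = ∑ k, ‖T (y k)‖^2 := h1
      _ ≤ ∑ k, (‖T‖ * ‖y k‖)^2 := h2
      _ = ‖T‖^2 * ∑ k, ‖y k‖^2 := by rw [Finset.mul_sum]; exact Finset.sum_congr rfl fun k _ => by ring
      _ = (‖T‖ * ‖x‖)^2 := by rw [h4]; ring
  have hnn : (0:ℝ) ≤ ‖T‖ * ‖x‖ := mul_nonneg (norm_nonneg _) (norm_nonneg _)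
  nlinarith [norm_nonneg (kronApply M x)]

/-- block average is preserved by mixing -/
lemma blockAvg_kron {n d : ℕ} {W : Matrix (Fin n) (Fin n) ℝ} (hW : IsMixing W)
    (x : Stacked n d) : blockAvg (kronApply W x) = blockAvg x := by
  have hcol : ∀ j, ∑ i, W i j = 1 := by
    intro j
    have h := congrFun hW.2 j
    simpa [Matrix.vecMul, dotProduct] using h
  unfold blockAvg kronApply
  congr 1
  rw [Finset.sum_comm]
  refine Finset.sum_congr rfl fun j _ => ?_
  rw [← Finset.sum_smul, hcol j, one_smul]

/-- key identity: consensus error of the mixed vector -/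
lemma kron_sub_identity {n d : ℕ} {W : Matrix (Fin n) (Fin n) ℝ} (hW : IsMixing W)
    (x : Stacked n d) :
    kronApply W x - stack n (blockAvg (kronApply W x)) =
      kronApply (W - (n : ℝ)⁻¹ • Matrix.of fun _ _ => (1 : ℝ))
        (x - stack n (blockAvg x)) := by
  have hrow : ∀ i, ∑ j, W i j = 1 := by
    intro i
    have h := congrFun hW.1 i
    simpa [Matrix.mulVec, dotProduct] using h
  rw [blockAvg_kron hW]
  refine PiLp.ext fun i => ?_
  have hn : (n:ℝ) ≠ 0 := Nat.cast_ne_zero.2 (Fin.pos i).ne'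
  have hsum : ∑ j, x j = (n:ℝ) • blockAvg x := by
    unfold blockAvg
    rw [smul_smul, mul_inv_cancel₀ hn, one_smul]
  rw [PiLp.sub_apply]
  have hRHS : kronApply (W - (n : ℝ)⁻¹ • Matrix.of fun _ _ => (1 : ℝ))
        (x - stack n (blockAvg x)) i
      = ∑ j, ((W i j - (n:ℝ)⁻¹) • (x j - blockAvg x)) := by
    have hentry : ∀ j, ((W - (n : ℝ)⁻¹ • Matrix.of fun _ _ => (1 : ℝ) :
          Matrix (Fin n) (Fin n) ℝ)) i j
        = W i j - (n:ℝ)⁻¹ := by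
      intro j
      simp [Matrix.sub_apply, Matrix.smul_apply, Matrix.of_apply]
    unfold kronApply
    rw [PiLp.toLp_apply]
    refine Finset.sum_congr rfl fun j _ => ?_
    rw [hentry]
    rfl
  rw [hRHS]
  have expand : ∀ j : Fin n, (W i j - (n:ℝ)⁻¹) • (x j - blockAvg x)
      = (W i j • x j - W i j • blockAvg x) - ((n:ℝ)⁻¹ • x j - (n:ℝ)⁻¹ • blockAvg x) := by
    intro j
    rw [sub_smul, smul_sub, smul_sub]
  simp_rw [expand]
  rw [Finset.sum_sub_distrib, Finset.sum_sub_distrib, Finset.sum_sub_distrib,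
    ← Finset.sum_smul, hrow i, one_smul, ← Finset.smul_sum, hsum,
    smul_smul, inv_mul_cancel₀ hn, one_smul]
  have hconst : ∑ _j : Fin n, (n:ℝ)⁻¹ • blockAvg x = blockAvg x := by
    rw [Finset.sum_const, Finset.card_univ, Fintype.card_fin,
      ← Nat.cast_smul_eq_nsmul ℝ, smul_smul, mul_inv_cancel₀ hn, one_smul]
  rw [hconst, sub_self, sub_zero]
  rfl

/-- Pythagoras: removing the block average does not increase the norm -/
lemma norm_sub_stack_le {n d : ℕ} (x : Stacked n d) :
    ‖x - stack n (blockAvg x)‖ ≤ ‖x‖ := by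
  set a := blockAvg x with ha
  have hsum : ∑ i, x i = (n:ℝ) • a := by
    rcases Nat.eq_zero_or_pos n with h | h
    · subst h; simp [ha, blockAvg]
    · have hn : (n:ℝ) ≠ 0 := Nat.cast_ne_zero.2 h.ne'
      rw [ha]; unfold blockAvg
      rw [smul_smul, mul_inv_cancel₀ hn, one_smul]
  have hinner : (inner ℝ x (stack n a) : ℝ) = (n:ℝ) * ‖a‖^2 := by
    rw [PiLp.inner_apply]
    have : ∀ i : Fin n, (inner ℝ (x i) (stack n a i) : ℝ) = inner ℝ (x i) a := fun i => rfl
    simp_rw [this]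
    rw [← sum_inner, hsum, real_inner_smul_left, real_inner_self_eq_norm_sq]
  have hstacknorm : ‖stack n a‖^2 = (n:ℝ) * ‖a‖^2 := by
    rw [stacked_norm_sq]
    simp [stack, Finset.card_univ]
  have hexp : ‖x - stack n a‖^2 = ‖x‖^2 - (n:ℝ) * ‖a‖^2 := by
    rw [norm_sub_sq_real, hinner, hstacknorm]; ring
  have h1 : ‖x - stack n a‖^2 ≤ ‖x‖^2 := by
    rw [hexp]
    have : (0:ℝ) ≤ (n:ℝ) * ‖a‖^2 := by positivity
    linarith
  nlinarith [norm_nonneg (x - stack n a), norm_nonneg x]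

lemma blockAvg_add {n d : ℕ} (x y : Stacked n d) :
    blockAvg (x + y) = blockAvg x + blockAvg y := by
  unfold blockAvg
  simp only [PiLp.add_apply]
  rw [Finset.sum_add_distrib, smul_add]

lemma stack_add {n d : ℕ} (a c : Vec d) : stack n (a + c) = stack n a + stack n c := by
  refine PiLp.ext fun i => ?_
  rw [PiLp.add_apply]
  rfl

/- ### Main theorem -/

set_option maxHeartbeats 1600000

/-- Gradient-consensus-error step for the stochastic recursive
gradient update: with `gᵢ = (1/b)Σⱼ(∇φ_{i,j}(u'ᵢ) − ∇φ_{i,j}(uᵢ)) + vᵢ` and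
`v' = (W ⊗ I_d)g`, one has
`‖v' − 1ₙ⊗v̄'‖² ≤ (2α²/(1+α²))‖v − 1ₙ⊗v̄‖² + (2α²L²/(1−α²))‖u' − u‖²`. -/
theorem gradient_consensus_error_step {n d : ℕ} (W : Matrix (Fin n) (Fin n) ℝ) (α : ℝ)
    (hW : IsMixing W) (hα : α = mixingRate W) (hα1 : α ∈ Set.Ico (0 : ℝ) 1)
    (L : ℝ) (hL : 0 < L) (b : ℕ) (hb : 1 ≤ b)
    (φ : Fin n → Fin b → Vec d → ℝ)
    (hdiff : ∀ i j, Differentiable ℝ (φ i j))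
    (hlip : ∀ i j, ∀ x y : Vec d,
      ‖gradient (φ i j) x - gradient (φ i j) y‖ ≤ L * ‖x - y‖)
    (u u' v : Stacked n d) (g : Stacked n d)
    (hg : g = fun i =>
      ((b : ℝ)⁻¹ • ∑ j, (gradient (φ i j) (u' i) - gradient (φ i j) (u i))) + v i)
    (v' : Stacked n d) (hv' : v' = kronApply W g) :
    ‖v' - stack n (blockAvg v')‖ ^ 2 ≤
      (2 * α ^ 2 / (1 + α ^ 2)) * ‖v - stack n (blockAvg v)‖ ^ 2
      + (2 * α ^ 2 * L ^ 2 / (1 - α ^ 2)) * ‖u' - u‖ ^ 2 := by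
  obtain ⟨hα0, hαlt⟩ := hα1
  set Δ : Stacked n d := WithLp.toLp 2 (fun i =>
    (b : ℝ)⁻¹ • ∑ j, (gradient (φ i j) (u' i) - gradient (φ i j) (u i))) with hΔ
  have hgΔ : g = Δ + v := by
    refine PiLp.ext fun i => ?_
    rw [hg, PiLp.add_apply]
  -- blockwise Lipschitz bound
  have hΔi : ∀ i, ‖Δ i‖ ≤ L * ‖u' i - u i‖ := by
    intro i
    have hΔieq : Δ i = (b : ℝ)⁻¹ • ∑ j, (gradient (φ i j) (u' i) - gradient (φ i j) (u i)) := rfl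
    calc ‖Δ i‖
        = (b:ℝ)⁻¹ * ‖∑ j, (gradient (φ i j) (u' i) - gradient (φ i j) (u i))‖ := by
          rw [hΔieq, norm_smul, Real.norm_eq_abs, abs_of_nonneg (by positivity)]
      _ ≤ (b:ℝ)⁻¹ * ∑ j, ‖gradient (φ i j) (u' i) - gradient (φ i j) (u i)‖ := by
          have hbpos : (0:ℝ) ≤ (b:ℝ)⁻¹ := by positivity
          exact mul_le_mul_of_nonneg_left (norm_sum_le _ _) hbpos
      _ ≤ (b:ℝ)⁻¹ * ∑ _j : Fin b, (L * ‖u' i - u i‖) := by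
          have hbpos : (0:ℝ) ≤ (b:ℝ)⁻¹ := by positivity
          refine mul_le_mul_of_nonneg_left (Finset.sum_le_sum fun j _ => ?_) hbpos
          exact hlip i j (u' i) (u i)
      _ = (b:ℝ)⁻¹ * ((b:ℝ) * (L * ‖u' i - u i‖)) := by
          rw [Finset.sum_const, Finset.card_univ, Fintype.card_fin, nsmul_eq_mul]
      _ = L * ‖u' i - u i‖ := by
          have hbne : (b:ℝ) ≠ 0 := Nat.cast_ne_zero.2 (by omega)
          field_simp
  set B := ‖u' - u‖ with hB
  have hΔnorm : ‖Δ‖ ≤ L * B := by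
    have hsq : ‖Δ‖^2 ≤ (L * B)^2 := by
      rw [stacked_norm_sq]
      have : ∀ i : Fin n, ‖Δ i‖^2 ≤ L^2 * ‖u' i - u i‖^2 := by
        intro i
        have h := hΔi i
        nlinarith [norm_nonneg (Δ i), norm_nonneg (u' i - u i)]
      calc ∑ i, ‖Δ i‖^2 ≤ ∑ i, L^2 * ‖u' i - u i‖^2 :=
            Finset.sum_le_sum fun i _ => this i
        _ = L^2 * ∑ i, ‖(u' - u) i‖^2 := by
            rw [Finset.mul_sum]
            refine Finset.sum_congr rfl fun i _ => ?_
            rw [PiLp.sub_apply]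
        _ = (L * B)^2 := by rw [← stacked_norm_sq, hB]; ring
    nlinarith [norm_nonneg Δ, norm_nonneg (u' - u), hL.le, mul_nonneg hL.le (norm_nonneg (u' - u))]
  set A := ‖v - stack n (blockAvg v)‖ with hA
  set X := ‖v' - stack n (blockAvg v')‖ with hX
  -- consensus error bound via the mixing operator norm
  have hXb : X ≤ α * (A + L * B) := by
    have hid : v' - stack n (blockAvg v') =
        kronApply (W - (n : ℝ)⁻¹ • Matrix.of fun _ _ => (1 : ℝ))
          (g - stack n (blockAvg g)) := by
      rw [hv']
      exact kron_sub_identity hW g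
    have h1 : X ≤ α * ‖g - stack n (blockAvg g)‖ := by
      rw [hX, hid, hα]
      exact kron_op_bound _ _
    have hdecomp : g - stack n (blockAvg g) =
        (Δ - stack n (blockAvg Δ)) + (v - stack n (blockAvg v)) := by
      rw [hgΔ, blockAvg_add, stack_add]
      abel
    have h2 : ‖g - stack n (blockAvg g)‖ ≤ A + L * B := by
      rw [hdecomp]
      calc ‖(Δ - stack n (blockAvg Δ)) + (v - stack n (blockAvg v))‖
          ≤ ‖Δ - stack n (blockAvg Δ)‖ + ‖v - stack n (blockAvg v)‖ := norm_add_le _ _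
        _ ≤ ‖Δ‖ + A := by
            have := norm_sub_stack_le Δ
            rw [hA]; linarith
        _ ≤ A + L * B := by linarith [hΔnorm]
    calc X ≤ α * ‖g - stack n (blockAvg g)‖ := h1
      _ ≤ α * (A + L * B) := mul_le_mul_of_nonneg_left h2 hα0
  -- final algebra
  have hA0 : 0 ≤ A := norm_nonneg _
  have hB0 : 0 ≤ B := norm_nonneg _
  have hX0 : 0 ≤ X := norm_nonneg _
  have h1pos : (0:ℝ) < 1 + α^2 := by positivity
  have h2pos : (0:ℝ) < 1 - α^2 := by nlinarith
  clear_value X A B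
  have hXsq : X^2 ≤ α^2 * (A + L * B)^2 := by
    calc X^2 ≤ (α * (A + L * B))^2 := pow_le_pow_left₀ hX0 hXb 2
      _ = α^2 * (A + L * B)^2 := by ring
  have key : α^2 * (A + L * B)^2 ≤
      (2 * α^2 / (1 + α^2)) * A^2 + (2 * α^2 * L^2 / (1 - α^2)) * B^2 := by
    rw [div_mul_eq_mul_div, div_mul_eq_mul_div, div_add_div _ _ h1pos.ne' h2pos.ne',
      le_div_iff₀ (by positivity)]
    nlinarith [mul_nonneg (sq_nonneg α) (sq_nonneg ((1 - α^2) * A - (1 + α^2) * (L * B)))]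
  linarith

end
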